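/- There is a universal constant C ≥ 1 such that the following holds. Let n ≥ 1, let v ∈ ℝ^n and p ∈ ℝ^n with ‖p‖_∞ ≤ 1/2, and let α > 0 and 1 ≤ a ≤ n be such that α ≤ min{|v_1|, …, |v_a|}. Then the Lévy concentration function of the biased linear form X_{v,p} satisfies Q(α, X_{v,p}) ≤ C/√a. -/

import Mathlib

open MeasureTheory

/-- The biased product measure `μ_p` on `{-1,1}^n ⊂ ℝ^n`: coordinates are independent,
with `Pr[x i = 1] = (1 + p i)/2` and `Pr[x i = -1] = (1 - p i)/2`. -/
noncomputable def cubeMeasure {n : ℕ} (p : Fin n → ℝ) : Measure (Fin n → ℝ) :=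
  Measure.pi fun i =>
    ENNReal.ofReal ((1 + p i) / 2) • Measure.dirac (1 : ℝ) +
      ENNReal.ofReal ((1 - p i) / 2) • Measure.dirac (-1 : ℝ)

/-- The Lévy concentration function `Q(α, X_{v,p}) = sup_t Pr_{x ~ μ_p}[|⟨v,x⟩ - t| < α]`
of the biased linear form `X_{v,p} = ⟨v, x⟩`, `x ~ μ_p`. -/
noncomputable def levyQLinForm {n : ℕ} (v p : Fin n → ℝ) (α : ℝ) : ENNReal :=
  ⨆ t : ℝ, cubeMeasure p {x | |(∑ i, v i * x i) - t| < α}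


open Finset

lemma cb_sqrt_bound : ∀ k : ℕ, (Nat.centralBinom k : ℝ) * Real.sqrt (3 * k + 1) ≤ 4 ^ k := by
  intro k
  induction k with
  | zero => simp [Nat.centralBinom]
  | succ k ih =>
    have hA : (0:ℝ) ≤ (Nat.centralBinom k : ℝ) := Nat.cast_nonneg _
    have h1 : ((k:ℝ) + 1) * (Nat.centralBinom (k+1) : ℝ) = 2 * (2 * k + 1) * Nat.centralBinom k := by
      exact_mod_cast congrArg (Nat.cast : ℕ → ℝ) (Nat.succ_mul_centralBinom_succ k)
    have hs : Real.sqrt (3 * ((k:ℝ)+1) + 1) * (2 * k + 1) ≤ 2 * ((k:ℝ) + 1) * Real.sqrt (3 * k + 1) := by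
      have e1 : Real.sqrt (((2*(k:ℝ)+1)^2) * (3*((k:ℝ)+1)+1)) = Real.sqrt (3 * ((k:ℝ)+1) + 1) * (2 * k + 1) := by
        rw [Real.sqrt_mul (by positivity), Real.sqrt_sq (by positivity)]; ring
      have e2 : Real.sqrt (((2*((k:ℝ)+1))^2) * (3*(k:ℝ)+1)) = 2 * ((k:ℝ) + 1) * Real.sqrt (3 * k + 1) := by
        rw [Real.sqrt_mul (by positivity), Real.sqrt_sq (by positivity)]
      rw [← e1, ← e2]
      apply Real.sqrt_le_sqrt
      nlinarith [sq_nonneg ((k:ℝ))]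
    have hs1 : (0:ℝ) ≤ Real.sqrt (3*(k:ℝ)+1) := Real.sqrt_nonneg _
    have hkpos : (0:ℝ) < (k:ℝ) + 1 := by positivity
    rw [← mul_le_mul_iff_right₀ hkpos]
    push_cast
    calc ((k:ℝ)+1) * ((Nat.centralBinom (k+1) : ℝ) * Real.sqrt (3*((k:ℝ)+1)+1))
        = (Nat.centralBinom k : ℝ) * (Real.sqrt (3*((k:ℝ)+1)+1) * (2*k+1)) * 2 := by
          rw [← mul_assoc, h1]; ring
      _ ≤ (Nat.centralBinom k : ℝ) * (2 * ((k:ℝ)+1) * Real.sqrt (3*(k:ℝ)+1)) * 2 := by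
          exact mul_le_mul_of_nonneg_right (mul_le_mul_of_nonneg_left hs hA) (by norm_num)
      _ = 4 * ((k:ℝ)+1) * ((Nat.centralBinom k : ℝ) * Real.sqrt (3*(k:ℝ)+1)) := by ring
      _ ≤ 4 * ((k:ℝ)+1) * 4 ^ k := by
          exact mul_le_mul_of_nonneg_left ih (by positivity)
      _ = ((k:ℝ)+1) * 4 ^ (k+1) := by ring

lemma two_mul_choose_odd (k : ℕ) : 2 * (2 * k + 1).choose k = Nat.centralBinom (k + 1) := by
  have h := Nat.choose_succ_succ (2 * k + 1) k
  have hsymm : (2 * k + 1).choose (k + 1) = (2 * k + 1).choose k := by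
    have := Nat.choose_symm (by omega : k + 1 ≤ 2 * k + 1)
    simpa [show 2 * k + 1 - (k + 1) = k by omega] using this.symm
  rw [Nat.centralBinom]
  rw [show 2 * (k + 1) = (2 * k + 1) + 1 by ring, show (k+1) = k + 1 from rfl, h, hsymm]
  ring

lemma choose_half_sqrt (m : ℕ) : (m.choose (m / 2) : ℝ) * Real.sqrt (m + 1) ≤ 2 ^ m := by
  rcases Nat.even_or_odd m with ⟨k, hk⟩ | ⟨k, hk⟩
  · subst hk
    have h2 : (k + k) / 2 = k := by omega
    have hcb : (k+k).choose k = Nat.centralBinom k := by rw [Nat.centralBinom]; ring_nf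
    rw [h2, hcb]
    have hmono : Real.sqrt (((k + k : ℕ) : ℝ) + 1) ≤ Real.sqrt (3 * k + 1) := by
      apply Real.sqrt_le_sqrt; push_cast; linarith [Nat.cast_nonneg (α := ℝ) k]
    calc (Nat.centralBinom k : ℝ) * Real.sqrt (((k + k : ℕ) : ℝ) + 1)
        ≤ (Nat.centralBinom k : ℝ) * Real.sqrt (3*(k:ℝ)+1) :=
          mul_le_mul_of_nonneg_left hmono (Nat.cast_nonneg _)
      _ ≤ 4 ^ k := cb_sqrt_bound k
      _ = 2 ^ (k + k) := by rw [show (4:ℝ) = 2^2 by norm_num, ← pow_mul]; ring_nf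
  · subst hk
    have h2 : (2 * k + 1) / 2 = k := by omega
    rw [h2]
    have hid : ((2 * k + 1).choose k : ℝ) = (Nat.centralBinom (k+1) : ℝ) / 2 := by
      have := two_mul_choose_odd k
      field_simp
      exact_mod_cast (by omega : (2 * k + 1).choose k * 2 = Nat.centralBinom (k+1))
    rw [hid]
    have hmono : Real.sqrt ((2*k+1:ℕ) + 1 : ℝ) ≤ Real.sqrt (3 * (k+1) + 1) := by
      apply Real.sqrt_le_sqrt; push_cast; linarith [Nat.cast_nonneg (α := ℝ) k]
    calc (Nat.centralBinom (k+1) : ℝ) / 2 * Real.sqrt ((2*k+1:ℕ) + 1 : ℝ)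
        ≤ (Nat.centralBinom (k+1) : ℝ) / 2 * Real.sqrt (3 * (k+1) + 1) := by
          apply mul_le_mul_of_nonneg_left hmono; positivity
      _ = (Nat.centralBinom (k+1) : ℝ) * Real.sqrt (3 * ((k+1):ℕ) + 1) / 2 := by push_cast; ring
      _ ≤ 4 ^ (k+1) / 2 := by
          have := cb_sqrt_bound (k+1)
          push_cast at this ⊢; linarith
      _ = 2 ^ (2 * k + 1) := by
          rw [show (4:ℝ) = 2^2 by norm_num, ← pow_mul]
          rw [show 2 * (k+1) = (2*k+1) + 1 by ring, pow_succ]; ring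

lemma sperner_subset {ι : Type*} [DecidableEq ι] (B : Finset ι) (𝒜 : Finset (Finset ι))
    (hsub : ∀ T ∈ 𝒜, T ⊆ B) (hac : IsAntichain (· ⊆ ·) (𝒜 : Set (Finset ι))) :
    𝒜.card ≤ B.card.choose (B.card / 2) := by
  classical
  set f : Finset ι → Finset {x // x ∈ B} := fun T => T.subtype (· ∈ B) with hf
  have hrec : ∀ T ∈ 𝒜, (f T).map (Function.Embedding.subtype _) = T := by
    intro T hT
    rw [hf]
    exact Finset.subtype_map_of_mem (fun x hx => hsub T hT hx)
  have hinj : Set.InjOn f ↑𝒜 := by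
    intro T hT T' hT' he
    rw [← hrec T hT, ← hrec T' hT', he]
  have hcard : 𝒜.card = (𝒜.image f).card := (Finset.card_image_of_injOn hinj).symm
  have hac' : IsAntichain (· ⊆ ·) ((𝒜.image f : Finset (Finset {x // x ∈ B})) : Set (Finset {x // x ∈ B})) := by
    intro x hx y hy hne hsub'
    simp only [coe_image, Set.mem_image, mem_coe] at hx hy
    obtain ⟨T, hT, rfl⟩ := hx
    obtain ⟨T', hT', rfl⟩ := hy
    have hTne : T ≠ T' := fun h => hne (by rw [h])
    apply hac hT hT' hTne
    calc T = (f T).map (Function.Embedding.subtype _) := (hrec T hT).symm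
      _ ⊆ (f T').map (Function.Embedding.subtype _) := Finset.map_subset_map.2 hsub'
      _ = T' := hrec T' hT'
  have := IsAntichain.sperner hac'
  rwa [Fintype.card_coe, ← hcard] at this

open scoped Classical in
lemma count_bound {n a : ℕ} (v : Fin n → ℝ) (t α : ℝ) (hα : 0 < α)
    (hv : ∀ i : Fin n, (i : ℕ) < a → α ≤ |v i|) (σ : Fin n → Bool) (S : Finset (Fin n)) :
    (univ.filter (fun ε : Fin n → Bool =>
        (∀ i, i ∉ S → ε i = σ i) ∧ |(∑ i, v i * (if ε i then 1 else -1)) - t| < α)).card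
      ≤ 2 ^ ((S \ univ.filter (fun i : Fin n => (i : ℕ) < a)).card) *
        ((S ∩ univ.filter (fun i : Fin n => (i : ℕ) < a)).card.choose
          ((S ∩ univ.filter (fun i : Fin n => (i : ℕ) < a)).card / 2)) := by
  classical
  set Ia : Finset (Fin n) := univ.filter (fun i : Fin n => (i : ℕ) < a) with hIa
  set d : Fin n → Bool := fun i => decide (0 ≤ v i) with hd
  set E : Finset (Fin n → Bool) := univ.filter (fun ε : Fin n → Bool =>
        (∀ i, i ∉ S → ε i = σ i) ∧ |(∑ i, v i * (if ε i then 1 else -1)) - t| < α) with hE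
  set Φ : (Fin n → Bool) → Finset (Fin n) × Finset (Fin n) :=
    fun ε => ((S ∩ Ia).filter (fun i => ε i = d i), (S \ Ia).filter (fun i => ε i = true)) with hΦ
  -- pointwise values
  have hpt1 : ∀ (ε : Fin n → Bool) (i : Fin n),
      v i * (if ε i then 1 else -1) = if ε i = d i then |v i| else -|v i| := by
    intro ε i
    rcases le_or_gt 0 (v i) with h | h
    · have : d i = true := by simp [hd, h]
      cases hε : ε i <;> simp [this, hε, abs_of_nonneg h]
    · have : d i = false := by simp [hd, not_le.2 h]
      cases hε : ε i <;> simp [this, hε, abs_of_neg h]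
  -- value function
  set val : Finset (Fin n) × Finset (Fin n) → ℝ := fun q =>
    (2 * (∑ i ∈ q.1, |v i|) - (∑ i ∈ S ∩ Ia, |v i|))
      + ((∑ i ∈ q.2, v i) - ∑ i ∈ (S \ Ia) \ q.2, v i)
      + (∑ i ∈ univ \ S, v i * (if σ i then 1 else -1)) with hval_def
  have hval : ∀ ε ∈ E, (∑ i, v i * (if ε i then 1 else -1)) = val (Φ ε) := by
    intro ε hε
    rw [hE, mem_filter] at hε
    obtain ⟨-, hfix, -⟩ := hε
    have hsplit1 : (∑ i, v i * (if ε i then 1 else -1))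
        = (∑ i ∈ univ \ S, v i * (if ε i then 1 else -1))
          + ∑ i ∈ S, v i * (if ε i then 1 else -1) :=
      (Finset.sum_sdiff (subset_univ S)).symm
    have hsplit2 : (∑ i ∈ S, v i * (if ε i then 1 else -1))
        = (∑ i ∈ S \ Ia, v i * (if ε i then 1 else -1))
          + ∑ i ∈ S ∩ Ia, v i * (if ε i then 1 else -1) := by
      rw [← Finset.sum_sdiff (inter_subset_left : S ∩ Ia ⊆ S), Finset.sdiff_inter_self_left]
    -- piece on S ∩ Ia
    have hp1 : (∑ i ∈ S ∩ Ia, v i * (if ε i then 1 else -1))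
        = 2 * (∑ i ∈ (Φ ε).1, |v i|) - (∑ i ∈ S ∩ Ia, |v i|) := by
      calc (∑ i ∈ S ∩ Ia, v i * (if ε i then 1 else -1))
          = ∑ i ∈ S ∩ Ia, (if ε i = d i then |v i| else -|v i|) := by
            exact Finset.sum_congr rfl fun i _ => hpt1 ε i
        _ = (∑ i ∈ (S ∩ Ia).filter (fun i => ε i = d i), |v i|)
            + ∑ i ∈ (S ∩ Ia).filter (fun i => ¬(ε i = d i)), -|v i| := Finset.sum_ite _ _
        _ = (∑ i ∈ (Φ ε).1, |v i|) - ∑ i ∈ (S ∩ Ia) \ (Φ ε).1, |v i| := by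
            rw [Finset.filter_not, Finset.sum_neg_distrib]
            rfl
        _ = 2 * (∑ i ∈ (Φ ε).1, |v i|) - (∑ i ∈ S ∩ Ia, |v i|) := by
            rw [Finset.sum_sdiff_eq_sub (filter_subset _ _)]
            ring
    -- piece on S \ Ia
    have hp2 : (∑ i ∈ S \ Ia, v i * (if ε i then 1 else -1))
        = (∑ i ∈ (Φ ε).2, v i) - ∑ i ∈ (S \ Ia) \ (Φ ε).2, v i := by
      calc (∑ i ∈ S \ Ia, v i * (if ε i then 1 else -1))
          = ∑ i ∈ S \ Ia, (if ε i = true then v i else -(v i)) := by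
            refine Finset.sum_congr rfl fun i _ => ?_
            cases hε : ε i <;> simp [hε]
        _ = (∑ i ∈ (S \ Ia).filter (fun i => ε i = true), v i)
            + ∑ i ∈ (S \ Ia).filter (fun i => ¬(ε i = true)), -(v i) := Finset.sum_ite _ _
        _ = (∑ i ∈ (Φ ε).2, v i) - ∑ i ∈ (S \ Ia) \ (Φ ε).2, v i := by
            rw [Finset.filter_not, Finset.sum_neg_distrib]
            rfl
    -- piece outside S
    have hp3 : (∑ i ∈ univ \ S, v i * (if ε i then 1 else -1))
        = ∑ i ∈ univ \ S, v i * (if σ i then 1 else -1) := by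
      refine Finset.sum_congr rfl fun i hi => ?_
      rw [hfix i (by simpa using (mem_sdiff.1 hi).2)]
    rw [hsplit1, hsplit2, hp1, hp2, hp3, hval_def]
    ring
  -- injectivity of Φ on E
  have hinj : Set.InjOn Φ ↑E := by
    intro ε hε ε' hε' heq
    rw [Finset.mem_coe, hE, mem_filter] at hε hε'
    obtain ⟨-, hfix, -⟩ := hε
    obtain ⟨-, hfix', -⟩ := hε'
    have h1 := congrArg Prod.fst heq
    have h2 := congrArg Prod.snd heq
    simp only [hΦ] at h1 h2
    funext i
    by_cases hiS : i ∈ S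
    · by_cases hiI : i ∈ Ia
      · have hmem := Finset.ext_iff.1 h1 i
        simp only [mem_filter, mem_inter, hiS, hiI, true_and] at hmem
        cases hεi : ε i <;> cases hεi' : ε' i <;> cases hdi : d i <;>
          simp [hεi, hεi', hdi] at hmem ⊢
      · have hmem := Finset.ext_iff.1 h2 i
        simp only [mem_filter, mem_sdiff, hiS, hiI, true_and, not_false_iff] at hmem
        cases hεi : ε i <;> cases hεi' : ε' i <;> simp [hεi, hεi'] at hmem ⊢
    · rw [hfix i hiS, hfix' i hiS]
  have hcard : E.card = (E.image Φ).card := (Finset.card_image_of_injOn hinj).symm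
  have hsnd : ∀ q ∈ E.image Φ, q.2 ∈ (S \ Ia).powerset := by
    intro q hq
    obtain ⟨ε, -, rfl⟩ := Finset.mem_image.1 hq
    exact Finset.mem_powerset.2 (filter_subset _ _)
  have hfiber := Finset.card_eq_sum_card_fiberwise hsnd
  -- bound each fiber
  have hfib_bound : ∀ U ∈ (S \ Ia).powerset,
      ((E.image Φ).filter (fun q => q.2 = U)).card
        ≤ (S ∩ Ia).card.choose ((S ∩ Ia).card / 2) := by
    intro U hU
    set F := (E.image Φ).filter (fun q => q.2 = U) with hF
    have hinj2 : Set.InjOn Prod.fst (F : Set (Finset (Fin n) × Finset (Fin n))) := by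
      intro q hq q' hq' he
      rw [Finset.mem_coe, hF, mem_filter] at hq hq'
      exact Prod.ext he (hq.2.trans hq'.2.symm)
    have hc2 : F.card = (F.image Prod.fst).card := (Finset.card_image_of_injOn hinj2).symm
    set 𝒜 := F.image Prod.fst with h𝒜
    have hmemA : ∀ T ∈ 𝒜, T ⊆ S ∩ Ia ∧ |val (T, U) - t| < α := by
      intro T hT
      obtain ⟨q, hq, rfl⟩ := Finset.mem_image.1 hT
      rw [hF, mem_filter] at hq
      obtain ⟨hq1, hq2⟩ := hq
      obtain ⟨ε, hεE, rfl⟩ := Finset.mem_image.1 hq1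
      constructor
      · exact filter_subset _ _
      · have h1 := hval ε hεE
        rw [hE, mem_filter] at hεE
        have h2 := hεE.2.2
        rw [h1] at h2
        have : ((Φ ε).1, U) = Φ ε := Prod.ext rfl hq2.symm
        rwa [this]
    have hac : IsAntichain (· ⊆ ·) (𝒜 : Set (Finset (Fin n))) := by
      intro T hT T' hT' hne hsub'
      simp only [Finset.mem_coe] at hT hT'
      obtain ⟨hTs, hTv⟩ := hmemA T hT
      obtain ⟨hTs', hTv'⟩ := hmemA T' hT'
      have hne' : ¬ T' ⊆ T := fun h => hne (Finset.Subset.antisymm hsub' h)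
      have hnonempty : (T' \ T).Nonempty := by
        rw [Finset.sdiff_nonempty]; exact hne'
      obtain ⟨i₀, hi₀⟩ := hnonempty
      have hi₀a : (i₀ : ℕ) < a := by
        have := hTs' (Finset.mem_sdiff.1 hi₀).1
        rw [hIa] at this
        exact (mem_filter.1 (mem_inter.1 this).2).2
      have hsumge : α ≤ ∑ i ∈ T' \ T, |v i| := by
        calc α ≤ |v i₀| := hv i₀ hi₀a
          _ ≤ ∑ i ∈ T' \ T, |v i| :=
            Finset.single_le_sum (fun i _ => abs_nonneg (v i)) hi₀
      have hdiff : val (T', U) - val (T, U) = 2 * ∑ i ∈ T' \ T, |v i| := by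
        have h3 : ∑ i ∈ T' \ T, |v i| = (∑ i ∈ T', |v i|) - ∑ i ∈ T, |v i| :=
          Finset.sum_sdiff_eq_sub hsub'
        simp only [hval_def]
        rw [h3]
        ring
      have h1 : |val (T, U) - t| < α := hTv
      have h2 : |val (T', U) - t| < α := hTv'
      rw [abs_lt] at h1 h2
      linarith
    have := sperner_subset (S ∩ Ia) 𝒜 (fun T hT => (hmemA T hT).1) hac
    rw [hc2]
    exact this
  calc E.card = ∑ U ∈ (S \ Ia).powerset, ((E.image Φ).filter (fun q => q.2 = U)).card := by
        rw [hcard, hfiber]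
    _ ≤ ∑ _U ∈ (S \ Ia).powerset, (S ∩ Ia).card.choose ((S ∩ Ia).card / 2) :=
        Finset.sum_le_sum hfib_bound
    _ = 2 ^ ((S \ Ia).card) * ((S ∩ Ia).card.choose ((S ∩ Ia).card / 2)) := by
        rw [Finset.sum_const, Finset.card_powerset, smul_eq_mul]

set_option maxHeartbeats 1000000 in
lemma exp_bound {n : ℕ} (lam : Fin n → ℝ) (hlam : ∀ i, 1/2 ≤ lam i ∧ lam i ≤ 1)
    (B : Finset (Fin n)) :
    ∑ S ∈ (univ : Finset (Fin n)).powerset,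
        (∏ i ∈ S, lam i) * (∏ i ∈ univ \ S, (1 - lam i)) * (1 / ((S ∩ B).card + 1))
      ≤ 2 / (B.card + 1) := by
  classical
  set N := B.card with hN
  -- pointwise generating function bound
  have hgen : ∀ x : ℝ, 0 ≤ x → x ≤ 1 →
      ∑ S ∈ (univ : Finset (Fin n)).powerset,
          (∏ i ∈ S, lam i) * (∏ i ∈ univ \ S, (1 - lam i)) * x ^ ((S ∩ B).card)
        ≤ ((1 + x) / 2) ^ N := by
    intro x hx0 hx1
    have hid : ∑ S ∈ (univ : Finset (Fin n)).powerset,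
          (∏ i ∈ S, lam i) * (∏ i ∈ univ \ S, (1 - lam i)) * x ^ ((S ∩ B).card)
        = ∏ i : Fin n, (lam i * (if i ∈ B then x else 1) + (1 - lam i)) := by
      rw [Finset.prod_add]
      refine Finset.sum_congr rfl fun S hS => ?_
      rw [Finset.prod_mul_distrib, Finset.prod_ite_mem, Finset.prod_const]
      ring
    rw [hid]
    have hfinal : ∏ i : Fin n, (if i ∈ B then (1 + x) / 2 else 1) = ((1 + x) / 2) ^ N := by
      rw [Finset.prod_ite_mem univ B (fun _ => (1 + x) / 2), Finset.univ_inter,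
        Finset.prod_const, hN]
    rw [← hfinal]
    apply Finset.prod_le_prod
    · intro i _
      have h1 := (hlam i).1
      have h2 := (hlam i).2
      have : 0 ≤ lam i := by linarith
      by_cases hiB : i ∈ B <;> simp [hiB] <;> nlinarith
    · intro i _
      have h1 := (hlam i).1
      have h2 := (hlam i).2
      by_cases hiB : i ∈ B <;> simp [hiB] <;> nlinarith
  -- integrate both sides over [0,1]
  have hint_left : ∀ S : Finset (Fin n),
      ∫ x in (0:ℝ)..1, (∏ i ∈ S, lam i) * (∏ i ∈ univ \ S, (1 - lam i)) * x ^ ((S ∩ B).card)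
        = (∏ i ∈ S, lam i) * (∏ i ∈ univ \ S, (1 - lam i)) * (1 / ((S ∩ B).card + 1)) := by
    intro S
    rw [intervalIntegral.integral_const_mul, integral_pow]
    norm_num
  have hcont : ∀ S : Finset (Fin n), IntervalIntegrable
      (fun x : ℝ => (∏ i ∈ S, lam i) * (∏ i ∈ univ \ S, (1 - lam i)) * x ^ ((S ∩ B).card))
      MeasureTheory.volume 0 1 := by
    intro S
    exact (Continuous.intervalIntegrable (by continuity) 0 1)
  have hsum_eq : ∑ S ∈ (univ : Finset (Fin n)).powerset,
        (∏ i ∈ S, lam i) * (∏ i ∈ univ \ S, (1 - lam i)) * (1 / ((S ∩ B).card + 1))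
      = ∫ x in (0:ℝ)..1, ∑ S ∈ (univ : Finset (Fin n)).powerset,
          (∏ i ∈ S, lam i) * (∏ i ∈ univ \ S, (1 - lam i)) * x ^ ((S ∩ B).card) := by
    rw [intervalIntegral.integral_finset_sum (fun S _ => hcont S)]
    exact Finset.sum_congr rfl fun S _ => (hint_left S).symm
  have hrhs : (∫ x in (0:ℝ)..1, ((1 + x) / 2) ^ N) ≤ 2 / (N + 1) := by
    have hc : ((1:ℝ)/2) ≠ 0 := by norm_num
    have heq : (∫ x in (0:ℝ)..1, ((1 + x) / 2) ^ N)
        = ∫ x in (0:ℝ)..1, (fun u : ℝ => u ^ N) ((1/2) * x + 1/2) := by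
      refine intervalIntegral.integral_congr fun x _ => ?_
      norm_num
      ring_nf
    rw [heq, intervalIntegral.integral_comp_mul_add (fun u : ℝ => u ^ N) hc (1/2)]
    norm_num
    have h0 : (0:ℝ) < ((1:ℝ)/2) ^ (N + 1) := by positivity
    have h1 : (0:ℝ) < (N:ℝ) + 1 := by positivity
    calc 2 * ((1 - ((1:ℝ)/2) ^ (N + 1)) / ((N:ℝ) + 1)) = (2 - 2 * ((1:ℝ)/2) ^ (N+1)) / ((N:ℝ)+1) := by ring
      _ ≤ 2 / ((N:ℝ) + 1) := by gcongr; linarith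
  have hIntL : IntervalIntegrable (fun x : ℝ => ∑ S ∈ (univ : Finset (Fin n)).powerset,
      (∏ i ∈ S, lam i) * (∏ i ∈ univ \ S, (1 - lam i)) * x ^ ((S ∩ B).card))
      MeasureTheory.volume 0 1 := by
    apply Continuous.intervalIntegrable
    exact continuous_finset_sum _ (fun S _ => by continuity)
  calc ∑ S ∈ (univ : Finset (Fin n)).powerset,
        (∏ i ∈ S, lam i) * (∏ i ∈ univ \ S, (1 - lam i)) * (1 / ((S ∩ B).card + 1))
      = ∫ x in (0:ℝ)..1, ∑ S ∈ (univ : Finset (Fin n)).powerset,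
          (∏ i ∈ S, lam i) * (∏ i ∈ univ \ S, (1 - lam i)) * x ^ ((S ∩ B).card) := hsum_eq
    _ ≤ ∫ x in (0:ℝ)..1, ((1 + x) / 2) ^ N := by
        refine intervalIntegral.integral_mono_on (by norm_num)
          hIntL
          (Continuous.intervalIntegrable (by continuity) 0 1)
          (fun x hx => hgen x hx.1 hx.2)
    _ ≤ 2 / (N + 1) := hrhs

lemma final_real {n : ℕ} (lam : Fin n → ℝ) (hlam : ∀ i, 1/2 ≤ lam i ∧ lam i ≤ 1)
    (B : Finset (Fin n)) (hB : 1 ≤ B.card) :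
    ∑ S ∈ (univ : Finset (Fin n)).powerset,
        (∏ i ∈ S, lam i) * (∏ i ∈ univ \ S, (1 - lam i)) *
          (((S ∩ B).card.choose ((S ∩ B).card / 2) : ℝ) / 2 ^ ((S ∩ B).card))
      ≤ 2 / Real.sqrt B.card := by
  classical
  set w : Finset (Fin n) → ℝ := fun S => (∏ i ∈ S, lam i) * (∏ i ∈ univ \ S, (1 - lam i)) with hw
  have hwnn : ∀ S, 0 ≤ w S := by
    intro S
    apply mul_nonneg
    · exact Finset.prod_nonneg fun i _ => by linarith [(hlam i).1]
    · exact Finset.prod_nonneg fun i _ => by linarith [(hlam i).2]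
  have hwsum : ∑ S ∈ (univ : Finset (Fin n)).powerset, w S = 1 := by
    have := Finset.prod_add lam (fun i => 1 - lam i) (univ : Finset (Fin n))
    simp only [add_sub_cancel, Finset.prod_const_one] at this
    rw [hw, ← this]
  -- step 1: g(m) ≤ 1/sqrt(m+1)
  have hg : ∀ m : ℕ, ((m.choose (m / 2) : ℝ) / 2 ^ m) ≤ 1 / Real.sqrt (m + 1) := by
    intro m
    have h1 := choose_half_sqrt m
    have h2 : (0:ℝ) < Real.sqrt (m + 1) := Real.sqrt_pos.2 (by positivity)
    have h3 : (0:ℝ) < 2 ^ m := by positivity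
    rw [div_le_div_iff₀ h3 h2]
    linarith
  have hstep1 : ∑ S ∈ (univ : Finset (Fin n)).powerset,
        w S * (((S ∩ B).card.choose ((S ∩ B).card / 2) : ℝ) / 2 ^ ((S ∩ B).card))
      ≤ ∑ S ∈ (univ : Finset (Fin n)).powerset, w S * (1 / Real.sqrt ((S ∩ B).card + 1)) :=
    Finset.sum_le_sum fun S _ => mul_le_mul_of_nonneg_left (hg _) (hwnn S)
  -- step 2: Cauchy-Schwarz
  have hCS := Finset.sum_mul_sq_le_sq_mul_sq (univ : Finset (Fin n)).powerset
      (fun S => Real.sqrt (w S)) (fun S => Real.sqrt (w S) * (1 / Real.sqrt ((S ∩ B).card + 1)))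
  have hfg : ∀ S : Finset (Fin n),
      Real.sqrt (w S) * (Real.sqrt (w S) * (1 / Real.sqrt ((S ∩ B).card + 1)))
        = w S * (1 / Real.sqrt ((S ∩ B).card + 1)) := by
    intro S
    rw [← mul_assoc, Real.mul_self_sqrt (hwnn S)]
  have hsq : ∀ S : Finset (Fin n),
      (Real.sqrt (w S) * (1 / Real.sqrt ((S ∩ B).card + 1))) ^ 2
        = w S * (1 / (((S ∩ B).card : ℝ) + 1)) := by
    intro S
    rw [mul_pow, Real.sq_sqrt (hwnn S), one_div, one_div, inv_pow,
      Real.sq_sqrt (by positivity : (0:ℝ) ≤ ((S ∩ B).card : ℝ) + 1)]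
  have hsq' : ∀ S : Finset (Fin n), Real.sqrt (w S) ^ 2 = w S := fun S => Real.sq_sqrt (hwnn S)
  simp only [hfg, hsq, hsq'] at hCS
  rw [hwsum, one_mul] at hCS
  have hexp := exp_bound lam hlam B
  have hfinal2 : ∑ S ∈ (univ : Finset (Fin n)).powerset, w S * (1 / (((S ∩ B).card : ℝ) + 1))
      ≤ 2 / (B.card + 1) := hexp
  have hlhs_nn : 0 ≤ ∑ S ∈ (univ : Finset (Fin n)).powerset,
      w S * (1 / Real.sqrt ((S ∩ B).card + 1)) :=
    Finset.sum_nonneg fun S _ => mul_nonneg (hwnn S) (by positivity)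
  have hmain : ∑ S ∈ (univ : Finset (Fin n)).powerset, w S * (1 / Real.sqrt ((S ∩ B).card + 1))
      ≤ Real.sqrt (2 / (B.card + 1)) := by
    rw [← Real.sqrt_sq hlhs_nn]
    exact Real.sqrt_le_sqrt (hCS.trans hfinal2)
  have hlast : Real.sqrt (2 / ((B.card : ℝ) + 1)) ≤ 2 / Real.sqrt B.card := by
    have hb : (0:ℝ) < (B.card : ℝ) := by exact_mod_cast hB
    have h1 : Real.sqrt (2 / ((B.card : ℝ) + 1)) ≤ Real.sqrt (4 / (B.card : ℝ)) := by
      apply Real.sqrt_le_sqrt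
      rw [div_le_div_iff₀ (by positivity) hb]
      nlinarith
    calc Real.sqrt (2 / ((B.card : ℝ) + 1)) ≤ Real.sqrt (4 / (B.card : ℝ)) := h1
      _ = 2 / Real.sqrt (B.card : ℝ) := by
        rw [Real.sqrt_div (by norm_num : (0:ℝ) ≤ 4), show (4:ℝ) = 2^2 by norm_num,
          Real.sqrt_sq (by norm_num : (0:ℝ) ≤ 2)]
  exact hstep1.trans (hmain.trans hlast)

open scoped Classical in
lemma core_bound {n a : ℕ} (v p : Fin n → ℝ) (hp : ∀ i, |p i| ≤ 1/2) (α t : ℝ) (hα : 0 < α)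
    (hv : ∀ i : Fin n, (i : ℕ) < a → α ≤ |v i|) (ha : 1 ≤ a) (han : a ≤ n) :
    ∑ ε ∈ (univ : Finset (Fin n → Bool)).filter
        (fun ε => |(∑ i, v i * (if ε i then 1 else -1)) - t| < α),
      ∏ i, (if ε i then (1 + p i) / 2 else (1 - p i) / 2)
    ≤ 2 / Real.sqrt a := by
  classical
  set lam : Fin n → ℝ := fun i => 1 - |p i| with hlam_def
  have hlam : ∀ i, 1/2 ≤ lam i ∧ lam i ≤ 1 := by
    intro i
    constructor
    · have := hp i; simp only [hlam_def]; linarith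
    · have := abs_nonneg (p i); simp only [hlam_def]; linarith
  set σ : Fin n → Bool := fun i => decide (0 ≤ p i) with hσ_def
  set B : Finset (Fin n) := univ.filter (fun i : Fin n => (i : ℕ) < a) with hB_def
  have hBcard : B.card = a := by
    rw [hB_def]
    rw [show (univ.filter (fun i : Fin n => (i : ℕ) < a))
        = Finset.map ⟨Fin.castLE han, Fin.castLE_injective han⟩ univ by
      ext i
      simp only [mem_filter, mem_univ, true_and, Finset.mem_map, Function.Embedding.coeFn_mk]
      constructor
      · intro h; exact ⟨⟨(i : ℕ), h⟩, by ext; simp⟩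
      · rintro ⟨j, -, rfl⟩; exact j.2]
    simp
  have hwdec : ∀ (i : Fin n) (b : Bool),
      (if b then (1 + p i) / 2 else (1 - p i) / 2)
        = lam i / 2 + (1 - lam i) * (if b = σ i then 1 else 0) := by
    intro i b
    rcases le_or_gt 0 (p i) with h | h
    · have hσi : σ i = true := by simp [hσ_def, h]
      have habs : |p i| = p i := abs_of_nonneg h
      cases b <;> simp [hσi, hlam_def, habs] <;> ring
    · have hσi : σ i = false := by simp [hσ_def, not_le.2 h]
      have habs : |p i| = -p i := abs_of_neg h
      cases b <;> simp [hσi, hlam_def, habs] <;> ring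
  set filt : Finset (Fin n → Bool) := (univ : Finset (Fin n → Bool)).filter
        (fun ε => |(∑ i, v i * (if ε i then 1 else -1)) - t| < α) with hfilt_def
  -- expand the product
  have hexpand : ∀ ε : Fin n → Bool,
      (∏ i, (if ε i then (1 + p i) / 2 else (1 - p i) / 2))
        = ∑ S ∈ (univ : Finset (Fin n)).powerset,
            (∏ i ∈ S, lam i / 2) *
              ∏ i ∈ univ \ S, ((1 - lam i) * (if ε i = σ i then 1 else 0)) := by
    intro ε
    rw [← Finset.prod_add]
    exact Finset.prod_congr rfl fun i _ => hwdec i (ε i)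
  have hswap : ∑ ε ∈ filt, ∏ i, (if ε i then (1 + p i) / 2 else (1 - p i) / 2)
      = ∑ S ∈ (univ : Finset (Fin n)).powerset, ∑ ε ∈ filt,
          (∏ i ∈ S, lam i / 2) *
            ∏ i ∈ univ \ S, ((1 - lam i) * (if ε i = σ i then 1 else 0)) := by
    rw [← Finset.sum_comm]
    exact Finset.sum_congr rfl fun ε _ => hexpand ε
  -- per-S evaluation
  have hperS : ∀ S ∈ (univ : Finset (Fin n)).powerset,
      ∑ ε ∈ filt, (∏ i ∈ S, lam i / 2) *
          ∏ i ∈ univ \ S, ((1 - lam i) * (if ε i = σ i then 1 else 0))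
      = (∏ i ∈ S, lam i / 2) * (∏ i ∈ univ \ S, (1 - lam i)) *
          ((univ.filter (fun ε : Fin n → Bool =>
            (∀ i, i ∉ S → ε i = σ i) ∧ |(∑ i, v i * (if ε i then 1 else -1)) - t| < α)).card : ℝ) := by
    intro S _
    have h1 : ∀ ε : Fin n → Bool,
        (∏ i ∈ univ \ S, ((1 - lam i) * (if ε i = σ i then 1 else 0)))
          = (∏ i ∈ univ \ S, (1 - lam i)) * (if ∀ i ∈ univ \ S, ε i = σ i then 1 else 0) := by
      intro ε
      rw [Finset.prod_mul_distrib, Finset.prod_boole]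
      congr!
    calc ∑ ε ∈ filt, (∏ i ∈ S, lam i / 2) *
            ∏ i ∈ univ \ S, ((1 - lam i) * (if ε i = σ i then 1 else 0))
        = (∏ i ∈ S, lam i / 2) * (∏ i ∈ univ \ S, (1 - lam i)) *
            ∑ ε ∈ filt, (if ∀ i ∈ univ \ S, ε i = σ i then (1:ℝ) else 0) := by
          rw [Finset.mul_sum]
          refine Finset.sum_congr rfl fun ε _ => ?_
          rw [h1 ε]; ring
      _ = (∏ i ∈ S, lam i / 2) * (∏ i ∈ univ \ S, (1 - lam i)) *
            ((filt.filter (fun ε => ∀ i ∈ univ \ S, ε i = σ i)).card : ℝ) := by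
          rw [Finset.sum_boole]
      _ = (∏ i ∈ S, lam i / 2) * (∏ i ∈ univ \ S, (1 - lam i)) *
          ((univ.filter (fun ε : Fin n → Bool =>
            (∀ i, i ∉ S → ε i = σ i) ∧ |(∑ i, v i * (if ε i then 1 else -1)) - t| < α)).card : ℝ) := by
          congr 2
          rw [hfilt_def, Finset.filter_filter]
          congr 1
          ext ε
          simp only [Finset.mem_filter, Finset.mem_univ, true_and]
          constructor
          · rintro ⟨h2, h3⟩
            exact ⟨fun i hi => h3 i (Finset.mem_sdiff.2 ⟨Finset.mem_univ i, hi⟩), h2⟩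
          · rintro ⟨h3, h2⟩
            exact ⟨h2, fun i hi => h3 i (Finset.mem_sdiff.1 hi).2⟩
  -- per-S inequality
  have hterm : ∀ S ∈ (univ : Finset (Fin n)).powerset,
      (∏ i ∈ S, lam i / 2) * (∏ i ∈ univ \ S, (1 - lam i)) *
          ((univ.filter (fun ε : Fin n → Bool =>
            (∀ i, i ∉ S → ε i = σ i) ∧ |(∑ i, v i * (if ε i then 1 else -1)) - t| < α)).card : ℝ)
        ≤ (∏ i ∈ S, lam i) * (∏ i ∈ univ \ S, (1 - lam i)) *
            (((S ∩ B).card.choose ((S ∩ B).card / 2) : ℝ) / 2 ^ ((S ∩ B).card)) := by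
    intro S _
    have hN := count_bound v t α hα hv σ S
    have hce : (S ∩ B).card + (S \ B).card = S.card := Finset.card_inter_add_card_sdiff S B
    have hlamnn : ∀ i, (0:ℝ) ≤ lam i := fun i => le_trans (by norm_num) (hlam i).1
    have h1lamnn : ∀ i, (0:ℝ) ≤ 1 - lam i := fun i => by have := (hlam i).2; linarith
    have hc_nn : 0 ≤ (∏ i ∈ S, lam i / 2) * (∏ i ∈ univ \ S, (1 - lam i)) :=
      mul_nonneg (Finset.prod_nonneg fun i _ => div_nonneg (hlamnn i) (by norm_num))
        (Finset.prod_nonneg fun i _ => h1lamnn i)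
    have hprod : (∏ i ∈ S, lam i / 2) = (∏ i ∈ S, lam i) * (1/2 : ℝ) ^ S.card := by
      rw [← Finset.prod_const, ← Finset.prod_mul_distrib]
      exact Finset.prod_congr rfl fun i _ => by ring
    have hNreal : ((univ.filter (fun ε : Fin n → Bool =>
            (∀ i, i ∉ S → ε i = σ i) ∧ |(∑ i, v i * (if ε i then 1 else -1)) - t| < α)).card : ℝ)
        ≤ (2:ℝ) ^ ((S \ B).card) * (((S ∩ B).card.choose ((S ∩ B).card / 2) : ℝ)) := by
      exact_mod_cast Nat.cast_le.2 hN
    calc (∏ i ∈ S, lam i / 2) * (∏ i ∈ univ \ S, (1 - lam i)) *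
          ((univ.filter (fun ε : Fin n → Bool =>
            (∀ i, i ∉ S → ε i = σ i) ∧ |(∑ i, v i * (if ε i then 1 else -1)) - t| < α)).card : ℝ)
        ≤ (∏ i ∈ S, lam i / 2) * (∏ i ∈ univ \ S, (1 - lam i)) *
            ((2:ℝ) ^ ((S \ B).card) * (((S ∩ B).card.choose ((S ∩ B).card / 2) : ℝ))) :=
          mul_le_mul_of_nonneg_left hNreal hc_nn
      _ = (∏ i ∈ S, lam i) * (∏ i ∈ univ \ S, (1 - lam i)) *
            (((S ∩ B).card.choose ((S ∩ B).card / 2) : ℝ) / 2 ^ ((S ∩ B).card)) := by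
          rw [hprod, ← hce, pow_add]
          have h2 : ((1:ℝ)/2) ^ ((S \ B).card) * (2:ℝ) ^ ((S \ B).card) = 1 := by
            rw [div_pow, one_pow, div_mul_cancel₀]
            positivity
          have h3 : ((1:ℝ)/2) ^ ((S ∩ B).card) = 1 / 2 ^ ((S ∩ B).card) := by
            rw [div_pow, one_pow]
          have h4 : ((1:ℝ)/2) ^ ((S ∩ B).card) * (2:ℝ) ^ ((S ∩ B).card) = 1 := by
            rw [div_pow, one_pow, div_mul_cancel₀]
            positivity
          field_simp
          linear_combination (((∏ i ∈ S, lam i) * ∏ x ∈ univ \ S, (1 - lam x)) *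
            (((S ∩ B).card.choose ((S ∩ B).card / 2) : ℝ)) * ((1:ℝ)/2) ^ ((S ∩ B).card) *
            (2:ℝ) ^ ((S ∩ B).card)) * h2 +
            (((∏ i ∈ S, lam i) * ∏ x ∈ univ \ S, (1 - lam x)) *
            (((S ∩ B).card.choose ((S ∩ B).card / 2) : ℝ))) * h4
  -- assemble
  calc ∑ ε ∈ filt, ∏ i, (if ε i then (1 + p i) / 2 else (1 - p i) / 2)
      = ∑ S ∈ (univ : Finset (Fin n)).powerset, ∑ ε ∈ filt,
          (∏ i ∈ S, lam i / 2) *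
            ∏ i ∈ univ \ S, ((1 - lam i) * (if ε i = σ i then 1 else 0)) := hswap
    _ = ∑ S ∈ (univ : Finset (Fin n)).powerset,
          (∏ i ∈ S, lam i / 2) * (∏ i ∈ univ \ S, (1 - lam i)) *
          ((univ.filter (fun ε : Fin n → Bool =>
            (∀ i, i ∉ S → ε i = σ i) ∧ |(∑ i, v i * (if ε i then 1 else -1)) - t| < α)).card : ℝ) :=
        Finset.sum_congr rfl hperS
    _ ≤ ∑ S ∈ (univ : Finset (Fin n)).powerset,
          (∏ i ∈ S, lam i) * (∏ i ∈ univ \ S, (1 - lam i)) *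
            (((S ∩ B).card.choose ((S ∩ B).card / 2) : ℝ) / 2 ^ ((S ∩ B).card)) :=
        Finset.sum_le_sum hterm
    _ ≤ 2 / Real.sqrt B.card := final_real lam hlam B (by rw [hBcard]; exact ha)
    _ = 2 / Real.sqrt a := by rw [hBcard]

/-- Lemma 2.11, Littlewood–Offord: there is a universal constant `C ≥ 1`
such that if `‖p‖_∞ ≤ 1/2` and `α ≤ min {|v_1|, …, |v_a|}`, then
`Q(α, X_{v,p}) ≤ C / √a`. -/
theorem stmt_5 :
    ∃ C : ℝ, 1 ≤ C ∧
      ∀ (n : ℕ), 1 ≤ n →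
        ∀ (v p : Fin n → ℝ), (∀ i, |p i| ≤ 1 / 2) →
          ∀ (α : ℝ), 0 < α →
            ∀ (a : ℕ), 1 ≤ a → a ≤ n →
              (∀ i : Fin n, (i : ℕ) < a → α ≤ |v i|) →
              levyQLinForm v p α ≤ ENNReal.ofReal (C / Real.sqrt a) := by
  classical
  refine ⟨2, by norm_num, ?_⟩
  intro n hn v p hp α hα a ha han hva
  rw [levyQLinForm]
  apply iSup_le
  intro t
  set ν : Fin n → Measure ℝ := fun i =>
    ENNReal.ofReal ((1 + p i) / 2) • Measure.dirac (1 : ℝ) +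
      ENNReal.ofReal ((1 - p i) / 2) • Measure.dirac (-1 : ℝ) with hν_def
  haveI hfin : ∀ i, IsFiniteMeasure (ν i) := by
    intro i
    constructor
    rw [hν_def]
    simp only [Measure.add_apply, Measure.smul_apply, smul_eq_mul, measure_univ, mul_one]
    exact ENNReal.add_lt_top.2 ⟨ENNReal.ofReal_lt_top, ENNReal.ofReal_lt_top⟩
  have hμeq : cubeMeasure p = Measure.pi ν := rfl
  set A : Set (Fin n → ℝ) := {x | |(∑ i, v i * x i) - t| < α} with hA_def
  set cubeS : Set (Fin n → ℝ) := Set.pi Set.univ (fun _ => ({1, -1} : Set ℝ)) with hcubeS_def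
  have hcubeS_meas : MeasurableSet cubeS := by
    apply MeasurableSet.univ_pi
    intro i
    exact (measurableSet_singleton (-1)).insert 1
  -- the complement of the cube is null
  have hnull : cubeMeasure p cubeSᶜ = 0 := by
    have h1 : cubeMeasure p cubeS = cubeMeasure p Set.univ := by
      rw [hμeq, Measure.pi_pi, Measure.pi_univ]
      refine Finset.prod_congr rfl fun i _ => ?_
      rw [hν_def]
      simp only [Measure.add_apply, Measure.smul_apply, smul_eq_mul, measure_univ, mul_one]
      rw [Measure.dirac_apply, Measure.dirac_apply]
      simp [Set.indicator_of_mem, Set.mem_insert_iff]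
    rw [hμeq] at h1 ⊢
    haveI : IsFiniteMeasure (Measure.pi ν) := by
      constructor
      rw [Measure.pi_univ]
      exact ENNReal.prod_lt_top fun i _ => measure_lt_top (ν i) _
    rw [measure_compl hcubeS_meas (measure_ne_top _ _), h1, tsub_self]
  -- embedding of boolean cube
  set emb : (Fin n → Bool) → (Fin n → ℝ) := fun ε i => if ε i then (1:ℝ) else -1 with hemb_def
  have hemb_inj : Function.Injective emb := by
    intro ε ε' h
    funext i
    have := congrFun h i
    rw [hemb_def] at this
    simp only at this
    cases hε : ε i <;> cases hε' : ε' i <;> rw [hε, hε'] at this <;>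
      first
        | rfl
        | (norm_num at this)
  set filt : Finset (Fin n → Bool) := (univ : Finset (Fin n → Bool)).filter
      (fun ε => |(∑ i, v i * (if ε i then 1 else -1)) - t| < α) with hfilt_def
  set good : Finset (Fin n → ℝ) := filt.image emb with hgood_def
  have hsub : A ∩ cubeS ⊆ ↑good := by
    rintro x ⟨hxA, hxC⟩
    have hx : ∀ i, x i = 1 ∨ x i = -1 := by
      intro i
      have := hxC i (Set.mem_univ i)
      simpa [Set.mem_insert_iff] using this
    set ε : Fin n → Bool := fun i => decide (x i = 1) with hε_def
    have hembε : emb ε = x := by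
      funext i
      rcases hx i with h | h
      · simp [hemb_def, hε_def, h]
      · have : x i ≠ 1 := by rw [h]; norm_num
        simp [hemb_def, hε_def, h, this]
        intro h1
        norm_num at h1
    rw [Finset.coe_image]
    refine ⟨ε, ?_, hembε⟩
    rw [Finset.mem_coe, hfilt_def, Finset.mem_filter]
    refine ⟨Finset.mem_univ _, ?_⟩
    have : (∑ i, v i * (if ε i then (1:ℝ) else -1)) = ∑ i, v i * x i := by
      refine Finset.sum_congr rfl fun i _ => ?_
      rw [← hembε]
    rw [this]
    exact hxA
  -- singleton masses
  have hsingle : ∀ ε : Fin n → Bool,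
      cubeMeasure p {emb ε} = ENNReal.ofReal (∏ i, (if ε i then (1 + p i) / 2 else (1 - p i) / 2)) := by
    intro ε
    have hpi : ({emb ε} : Set (Fin n → ℝ)) = Set.pi Set.univ (fun i => {emb ε i}) := by
      rw [Set.univ_pi_singleton]
    rw [hμeq, hpi, Measure.pi_pi]
    have hfac : ∀ i, ν i {emb ε i} = ENNReal.ofReal (if ε i then (1 + p i) / 2 else (1 - p i) / 2) := by
      intro i
      rw [hν_def]
      cases hε : ε i
      · have h1 : emb ε i = -1 := by simp [hemb_def, hε]
        rw [h1]
        simp only [Measure.add_apply, Measure.smul_apply, smul_eq_mul]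
        rw [Measure.dirac_apply' _ (measurableSet_singleton _),
          Measure.dirac_apply' _ (measurableSet_singleton _)]
        rw [Set.indicator_of_notMem (by norm_num), Set.indicator_of_mem (by norm_num)]
        simp [hε]
      · have h1 : emb ε i = 1 := by simp [hemb_def, hε]
        rw [h1]
        simp only [Measure.add_apply, Measure.smul_apply, smul_eq_mul]
        rw [Measure.dirac_apply' _ (measurableSet_singleton _),
          Measure.dirac_apply' _ (measurableSet_singleton _)]
        rw [Set.indicator_of_mem (by norm_num), Set.indicator_of_notMem (by norm_num)]
        simp [hε]
    rw [Finset.prod_congr rfl fun i _ => hfac i]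
    rw [← ENNReal.ofReal_prod_of_nonneg]
    intro i _
    have := hp i
    have := abs_le.1 (hp i)
    split <;> linarith [this.1, this.2]
  -- main chain
  calc cubeMeasure p A ≤ cubeMeasure p ((A ∩ cubeS) ∪ cubeSᶜ) := by
        apply measure_mono
        intro x hx
        by_cases hc : x ∈ cubeS
        · exact Or.inl ⟨hx, hc⟩
        · exact Or.inr hc
    _ ≤ cubeMeasure p (A ∩ cubeS) + cubeMeasure p cubeSᶜ := measure_union_le _ _
    _ = cubeMeasure p (A ∩ cubeS) := by rw [hnull, add_zero]
    _ ≤ cubeMeasure p ↑good := measure_mono hsub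
    _ ≤ ∑ x ∈ good, cubeMeasure p {x} := by
        have : (↑good : Set (Fin n → ℝ)) = ⋃ x ∈ good, {x} := by
          ext y; simp
        rw [this]
        exact measure_biUnion_finset_le good _
    _ = ∑ ε ∈ filt, cubeMeasure p {emb ε} := by
        rw [hgood_def, Finset.sum_image (fun x _ y _ h => hemb_inj h)]
    _ = ∑ ε ∈ filt, ENNReal.ofReal (∏ i, (if ε i then (1 + p i) / 2 else (1 - p i) / 2)) := by
        exact Finset.sum_congr rfl fun ε _ => hsingle ε
    _ = ENNReal.ofReal (∑ ε ∈ filt, ∏ i, (if ε i then (1 + p i) / 2 else (1 - p i) / 2)) := by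
        rw [ENNReal.ofReal_sum_of_nonneg]
        intro ε _
        apply Finset.prod_nonneg
        intro i _
        have := abs_le.1 (hp i)
        split <;> linarith [this.1, this.2]
    _ ≤ ENNReal.ofReal (2 / Real.sqrt a) :=
        ENNReal.ofReal_le_ofReal (core_bound v p hp α t hα hva ha han)
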